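/- Let β > 0, θ ≥ 1, γ ∈ (0,1], and t₀ ≤ T be integers. Let p ∈ ℝⁿ with p ≥ 0 solve p = s + Aᵀp + Σᵢ min{rᵢ + Bᵢᵀp, 0}·Eᵢ and satisfy p ≤ β·s. Let x(t) ∈ ℝⁿ, ε(t) ∈ ℝ^m, w(t) ∈ ℝⁿ and K(t) ∈ 𝒦(E) for t₀ ≤ t ≤ T−1 satisfy: x(t) ≥ 0 for all t, the dynamics x(t+1) = A·x(t) + B·(K(t)·x(t) + ε(t)) + w(t), and the suboptimality inequality θ·p − s ≥ Aᵀp + K(t)ᵀ(r + Bᵀp) for every t. Suppose γ satisfies γ·(s − Ēᵀr) ≤ s − Ēᵀr − (θ−1)·β·s entrywise. Then Σ_{t=t₀}^{T−1} (sᵀx(t) + rᵀK(t)x(t)) ≤ γ⁻¹·( pᵀx(t₀) + Σ_{t=t₀}^{T−1} β·sᵀ|B·ε(t) + w(t)| ). -/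
import Mathlib


open Matrix Finset

/-- `min{v, 0}`: the minimum of 0 and of all entries of the vector `v`. -/
noncomputable def minZero {α : Type*} [Fintype α] (v : α → ℝ) : ℝ :=
  Finset.univ.fold min 0 v

/-- `‖v‖∞` for a vector: the maximum absolute entry. -/
noncomputable def vecSupNorm {α : Type*} [Fintype α] (v : α → ℝ) : ℝ :=
  Finset.univ.fold max 0 (fun a => |v a|)

/-- `‖M‖∞` for a matrix: the maximum absolute row sum. -/
noncomputable def matInfNorm {α β : Type*} [Fintype α] [Fintype β] (M : Matrix α β ℝ) : ℝ :=
  Finset.univ.fold max 0 (fun a => ∑ b, |M a b|)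

/-- `‖M‖₁` for a matrix: the maximum absolute column sum. -/
noncomputable def matOneNorm {α β : Type*} [Fintype α] [Fintype β] (M : Matrix α β ℝ) : ℝ :=
  matInfNorm Mᵀ

/-- The feasible gain set 𝒦(E): K ≥ 0 entrywise and, for each block i,
either 𝟏ᵀKᵢ = Eᵢᵀ or 𝟏ᵀKᵢ = 0. -/
def feasibleGain {n : ℕ} (m : Fin n → ℕ) (E : Matrix (Fin n) (Fin n) ℝ) :
    Set (Matrix ((i : Fin n) × Fin (m i)) (Fin n) ℝ) :=
  {K | (∀ a j, 0 ≤ K a j) ∧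
    ∀ i : Fin n, (∀ j, ∑ k : Fin (m i), K ⟨i, k⟩ j = E i j) ∨ (∀ k j, K ⟨i, k⟩ j = 0)}

/-- The extended constraint matrix Ē: for each i, mᵢ stacked copies of the row Eᵢᵀ. -/
def extE {n : ℕ} (m : Fin n → ℕ) (E : Matrix (Fin n) (Fin n) ℝ) :
    Matrix ((i : Fin n) × Fin (m i)) (Fin n) ℝ :=
  fun a j => E a.1 j

/-- `K` is a greedy gain for `v`: `K ∈ 𝒦(E)` and `Kᵢᵀ vᵢ = min{vᵢ,0}·Eᵢ` for each block i. -/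
def IsGreedy {n : ℕ} (m : Fin n → ℕ) (E : Matrix (Fin n) (Fin n) ℝ)
    (v : ((i : Fin n) × Fin (m i)) → ℝ)
    (K : Matrix ((i : Fin n) × Fin (m i)) (Fin n) ℝ) : Prop :=
  K ∈ feasibleGain m E ∧
    ∀ i j, (∑ k : Fin (m i), K ⟨i, k⟩ j * v ⟨i, k⟩)
      = minZero (fun k : Fin (m i) => v ⟨i, k⟩) * E i j

/-- The Bellman operator `p ↦ s + Aᵀp + Σᵢ min{rᵢ + Bᵢᵀp, 0}·Eᵢ`. -/
noncomputable def bellman {n : ℕ} (m : Fin n → ℕ) (A : Matrix (Fin n) (Fin n) ℝ)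
    (B : Matrix (Fin n) ((i : Fin n) × Fin (m i)) ℝ)
    (s : Fin n → ℝ) (r : ((i : Fin n) × Fin (m i)) → ℝ)
    (E : Matrix (Fin n) (Fin n) ℝ) (p : Fin n → ℝ) : Fin n → ℝ :=
  fun j => s j + Aᵀ.mulVec p j +
    ∑ i : Fin n, minZero (fun k : Fin (m i) => r ⟨i, k⟩ + Bᵀ.mulVec p ⟨i, k⟩) * E i j

/-- Corollary 1: accumulated-cost bound for the adaptive policy. -/
theorem stmt_7 {n : ℕ} {m : Fin n → ℕ} (hn : 0 < n) (hm : ∀ i, 0 < m i)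
    (A : Matrix (Fin n) (Fin n) ℝ) (B : Matrix (Fin n) ((i : Fin n) × Fin (m i)) ℝ)
    (s : Fin n → ℝ) (hs : ∀ j, 0 ≤ s j)
    (r : ((i : Fin n) × Fin (m i)) → ℝ) (hr : ∀ a, 0 ≤ r a)
    (E : Matrix (Fin n) (Fin n) ℝ) (hE : ∀ i j, 0 ≤ E i j)
    (β θ γ : ℝ) (hβ : 0 < β) (hθ : 1 ≤ θ) (hγ0 : 0 < γ) (hγ1 : γ ≤ 1)
    (t₀ T : ℕ) (ht₀T : t₀ ≤ T)
    (p : Fin n → ℝ) (hp0 : ∀ j, 0 ≤ p j)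
    (hpeq : p = bellman m A B s r E p)
    (hpβ : ∀ j, p j ≤ β * s j)
    (x : ℕ → Fin n → ℝ) (ε : ℕ → ((i : Fin n) × Fin (m i)) → ℝ) (w : ℕ → Fin n → ℝ)
    (K : ℕ → Matrix ((i : Fin n) × Fin (m i)) (Fin n) ℝ)
    (hKfeas : ∀ t, t₀ ≤ t → t < T → K t ∈ feasibleGain m E)
    (hx : ∀ t, t₀ ≤ t → t ≤ T → ∀ j, 0 ≤ x t j)
    (hdyn : ∀ t, t₀ ≤ t → t < T →
      x (t + 1) = A.mulVec (x t) + B.mulVec ((K t).mulVec (x t) + ε t) + w t)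
    (hsub : ∀ t, t₀ ≤ t → t < T → ∀ j,
      Aᵀ.mulVec p j + (K t)ᵀ.mulVec (r + Bᵀ.mulVec p) j ≤ θ * p j - s j)
    (hγ : ∀ j, γ * (s j - (extE m E)ᵀ.mulVec r j) ≤
      s j - (extE m E)ᵀ.mulVec r j - (θ - 1) * (β * s j)) :
    ∑ t ∈ Finset.Ico t₀ T, (s ⬝ᵥ x t + r ⬝ᵥ (K t).mulVec (x t)) ≤
      γ⁻¹ * (p ⬝ᵥ x t₀ +
        ∑ t ∈ Finset.Ico t₀ T, β * ∑ j, s j * |B.mulVec (ε t) j + w t j|) := by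
  set N : ℕ → ℝ := fun t => β * ∑ j, s j * |B.mulVec (ε t) j + w t j| with hN
  have key : ∀ t, t₀ ≤ t → t < T →
      γ * (s ⬝ᵥ x t + r ⬝ᵥ (K t).mulVec (x t)) ≤
        p ⬝ᵥ x t - p ⬝ᵥ x (t + 1) + N t := by
    intro t h1 h2
    have hxnn : ∀ j, 0 ≤ x t j := hx t h1 h2.le
    have hKx : ∀ a, 0 ≤ (K t).mulVec (x t) a := by
      intro a
      simp only [Matrix.mulVec, dotProduct]
      apply Finset.sum_nonneg
      intro j _
      exact mul_nonneg ((hKfeas t h1 h2).1 a j) (hxnn j)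
    -- dynamics dotted with p
    have hdot : p ⬝ᵥ x (t + 1) = Aᵀ.mulVec p ⬝ᵥ x t +
        Bᵀ.mulVec p ⬝ᵥ (K t).mulVec (x t) + p ⬝ᵥ (B.mulVec (ε t) + w t) := by
      rw [hdyn t h1 h2]
      rw [Matrix.mulVec_add, Matrix.mulVec_transpose, Matrix.mulVec_transpose,
        ← Matrix.dotProduct_mulVec, ← Matrix.dotProduct_mulVec]
      simp only [dotProduct_add]
      ring
    -- suboptimality dotted with x t
    have hsubdot : Aᵀ.mulVec p ⬝ᵥ x t + Bᵀ.mulVec p ⬝ᵥ (K t).mulVec (x t) +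
        r ⬝ᵥ (K t).mulVec (x t) ≤ θ * (p ⬝ᵥ x t) - s ⬝ᵥ x t := by
      have e1 : Aᵀ.mulVec p ⬝ᵥ x t + Bᵀ.mulVec p ⬝ᵥ (K t).mulVec (x t) +
          r ⬝ᵥ (K t).mulVec (x t)
          = ∑ j, (Aᵀ.mulVec p j + (K t)ᵀ.mulVec (r + Bᵀ.mulVec p) j) * x t j := by
        have e2 : (K t)ᵀ.mulVec (r + Bᵀ.mulVec p) ⬝ᵥ x t
            = (r + Bᵀ.mulVec p) ⬝ᵥ (K t).mulVec (x t) := by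
          rw [Matrix.mulVec_transpose, ← Matrix.dotProduct_mulVec]
        have e3 : ∑ j, (Aᵀ.mulVec p j + (K t)ᵀ.mulVec (r + Bᵀ.mulVec p) j) * x t j
            = Aᵀ.mulVec p ⬝ᵥ x t + (K t)ᵀ.mulVec (r + Bᵀ.mulVec p) ⬝ᵥ x t := by
          simp [dotProduct, add_mul, Finset.sum_add_distrib]
        rw [e3, e2, add_dotProduct]
        ring
      rw [e1]
      have e4 : θ * (p ⬝ᵥ x t) - s ⬝ᵥ x t = ∑ j, (θ * p j - s j) * x t j := by
        simp [dotProduct, sub_mul, Finset.sum_sub_distrib, Finset.mul_sum, mul_assoc]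
      rw [e4]
      apply Finset.sum_le_sum
      intro j _
      exact mul_le_mul_of_nonneg_right (hsub t h1 h2 j) (hxnn j)
    -- noise bound
    have hnoise : p ⬝ᵥ (B.mulVec (ε t) + w t) ≤ N t := by
      rw [hN]
      simp only []
      rw [Finset.mul_sum]
      apply Finset.sum_le_sum
      intro j _
      have hv := le_abs_self ((B.mulVec (ε t) + w t) j)
      have h1' : p j * (B.mulVec (ε t) + w t) j ≤ p j * |B.mulVec (ε t) j + w t j| := by
        have : (B.mulVec (ε t) + w t) j = B.mulVec (ε t) j + w t j := rfl
        rw [this] at hv ⊢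
        exact mul_le_mul_of_nonneg_left hv (hp0 j)
      have h2' : p j * |B.mulVec (ε t) j + w t j| ≤ β * (s j * |B.mulVec (ε t) j + w t j|) := by
        rw [← mul_assoc]
        exact mul_le_mul_of_nonneg_right (hpβ j) (abs_nonneg _)
      calc p j * (B.mulVec (ε t) + w t) j ≤ p j * |B.mulVec (ε t) j + w t j| := h1'
        _ ≤ β * (s j * |B.mulVec (ε t) j + w t j|) := h2'
    -- gap bound
    have hgap : (θ - 1) * (p ⬝ᵥ x t) + γ * (s ⬝ᵥ x t + r ⬝ᵥ (K t).mulVec (x t)) ≤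
        s ⬝ᵥ x t + r ⬝ᵥ (K t).mulVec (x t) := by
      have hq : 0 ≤ (extE m E)ᵀ.mulVec r ⬝ᵥ x t := by
        simp only [Matrix.mulVec, dotProduct, Matrix.transpose_apply, extE]
        apply Finset.sum_nonneg
        intro j _
        apply mul_nonneg _ (hxnn j)
        apply Finset.sum_nonneg
        intro a _
        exact mul_nonneg (hE a.1 j) (hr a)
      have hrKx : 0 ≤ r ⬝ᵥ (K t).mulVec (x t) := by
        simp only [dotProduct]
        apply Finset.sum_nonneg
        intro a _
        exact mul_nonneg (hr a) (hKx a)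
      have h5 : (θ - 1) * (p ⬝ᵥ x t) ≤
          ∑ j, ((1 - γ) * (s j - (extE m E)ᵀ.mulVec r j)) * x t j := by
        have e6 : (θ - 1) * (p ⬝ᵥ x t) = ∑ j, ((θ - 1) * p j) * x t j := by
          simp [dotProduct, Finset.mul_sum, mul_assoc]
        rw [e6]
        apply Finset.sum_le_sum
        intro j _
        apply mul_le_mul_of_nonneg_right _ (hxnn j)
        have hg := hγ j
        have hp' : (θ - 1) * p j ≤ (θ - 1) * (β * s j) :=
          mul_le_mul_of_nonneg_left (hpβ j) (by linarith)
        nlinarith [hpβ j]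
      have e7 : ∑ j, ((1 - γ) * (s j - (extE m E)ᵀ.mulVec r j)) * x t j
          = (1 - γ) * (s ⬝ᵥ x t - (extE m E)ᵀ.mulVec r ⬝ᵥ x t) := by
        simp [dotProduct, sub_mul, mul_sub, Finset.sum_sub_distrib, Finset.mul_sum, mul_assoc]
      rw [e7] at h5
      nlinarith
    linarith
  -- telescoping sum
  have main : ∀ T', t₀ ≤ T' → T' ≤ T →
      γ * ∑ t ∈ Finset.Ico t₀ T', (s ⬝ᵥ x t + r ⬝ᵥ (K t).mulVec (x t)) ≤
        p ⬝ᵥ x t₀ - p ⬝ᵥ x T' + ∑ t ∈ Finset.Ico t₀ T', N t := by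
    intro T' hT'
    induction T', hT' using Nat.le_induction with
    | base => intro _; simp
    | succ T' hT' ih =>
      intro hT'T
      have hlt : T' < T := hT'T
      have h1 := ih hlt.le
      have hk := key T' hT' hlt
      rw [Finset.sum_Ico_succ_top hT', Finset.sum_Ico_succ_top hT', mul_add]
      linarith
  have hPT : 0 ≤ p ⬝ᵥ x T := by
    simp only [dotProduct]
    exact Finset.sum_nonneg fun j _ => mul_nonneg (hp0 j) (hx T ht₀T le_rfl j)
  have hmain := main T ht₀T le_rfl
  rw [le_inv_mul_iff₀ hγ0]
  linarith
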